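/- Let R be a 2-torsion free unital ring, n ≥ 2, and φ : Mₙ(R) → Mₙ(R) an additive map satisfying φ(AB + BA) = Aφ(B) + φ(B)A for all A, B ∈ Mₙ(R). Then φ(A) = A·φ(1) for all A ∈ Mₙ(R), and φ(1) lies in the centre of Mₙ(R). -/

import Mathlib

theorem stmt15 (R : Type*) [Ring R] (htf : ∀ r : R, r + r = 0 → r = 0)
    (n : ℕ) (hn : 2 ≤ n)
    (φ : Matrix (Fin n) (Fin n) R → Matrix (Fin n) (Fin n) R)
    (hadd : ∀ A B, φ (A + B) = φ A + φ B)
    (hφ : ∀ A B, φ (A * B + B * A) = A * φ B + φ B * A) :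
    (∀ A, φ A = A * φ 1) ∧ (∀ A, A * φ 1 = φ 1 * A) := by
  set c := φ 1 with hc
  have htfM : ∀ M : Matrix (Fin n) (Fin n) R, M + M = 0 → M = 0 := by
    intro M h
    ext i j
    have := congrFun (congrFun h i) j
    simp only [Matrix.add_apply, Matrix.zero_apply] at this
    simpa using htf _ this
  -- key symmetric relation
  have key : ∀ A B : Matrix (Fin n) (Fin n) R,
      A * φ B + φ B * A = B * φ A + φ A * B := by
    intro A B
    have h1 := hφ A B
    have h2 := hφ B A
    rw [show B * A + A * B = A * B + B * A from add_comm _ _] at h2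
    rw [h1] at h2
    exact h2
  -- 2 φ A = A c + c A
  have h2 : ∀ A : Matrix (Fin n) (Fin n) R, φ A + φ A = A * c + c * A := by
    intro A
    have := hφ A 1
    rw [mul_one, one_mul, hadd] at this
    exact this
  -- c commutes with commutators
  have hcomm : ∀ A B : Matrix (Fin n) (Fin n) R,
      (A * B - B * A) * c = c * (A * B - B * A) := by
    intro A B
    have E : (A * φ B + φ B * A) + (A * φ B + φ B * A)
        = (B * φ A + φ A * B) + (B * φ A + φ A * B) := by rw [key]
    have E2 : A * (φ B + φ B) + (φ B + φ B) * A
        = B * (φ A + φ A) + (φ A + φ A) * B := by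
      rw [mul_add, add_mul, mul_add, add_mul]
      linear_combination (norm := noncomm_ring) E
    rw [h2, h2] at E2
    have E3 : A * B * c + c * B * A + (A * B * c + c * B * A)
        = B * A * c + c * A * B + (B * A * c + c * A * B) := by
      linear_combination (norm := noncomm_ring) 2 * E2
    have E4 := htfM _ (by linear_combination (norm := noncomm_ring) E3 :
      ((A * B * c + c * B * A) - (B * A * c + c * A * B))
        + ((A * B * c + c * B * A) - (B * A * c + c * A * B)) = 0)
    linear_combination (norm := noncomm_ring) E4
  -- c commutes with std basis matrices
  haveI : Nontrivial (Fin n) := Fin.nontrivial_iff_two_le.mpr hn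
  have hstd : ∀ (i j : Fin n) (r : R),
      Matrix.single i j r * c = c * Matrix.single i j r := by
    have off : ∀ (i j : Fin n), i ≠ j → ∀ r : R,
        Matrix.single i j r * c = c * Matrix.single i j r := by
      intro i j hij r
      have := hcomm (Matrix.single i j r) (Matrix.single j j 1)
      rw [Matrix.single_mul_single_same,
        Matrix.single_mul_single_of_ne (h := Ne.symm hij), mul_one, sub_zero] at this
      exact this
    intro i j r
    rcases eq_or_ne i j with rfl | hij
    · obtain ⟨k, hk⟩ := exists_ne i
      have h1 := off i k (Ne.symm hk) r
      have h2 := off k i hk 1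
      have hprod : Matrix.single i k r * Matrix.single k i 1
          = Matrix.single i i r := by
        rw [Matrix.single_mul_single_same, mul_one]
      calc Matrix.single i i r * c
          = Matrix.single i k r * (Matrix.single k i 1 * c) := by
            rw [← mul_assoc, hprod]
        _ = Matrix.single i k r * (c * Matrix.single k i 1) := by rw [h2]
        _ = (Matrix.single i k r * c) * Matrix.single k i 1 := by
            rw [mul_assoc]
        _ = c * Matrix.single i i r := by rw [h1, mul_assoc, hprod]
    · exact off i j hij r
  -- c is central
  have hcentral : ∀ A : Matrix (Fin n) (Fin n) R, A * c = c * A := by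
    intro A
    rw [Matrix.matrix_eq_sum_single A]
    rw [Finset.sum_mul, Finset.mul_sum]
    refine Finset.sum_congr rfl fun i _ => ?_
    rw [Finset.sum_mul, Finset.mul_sum]
    exact Finset.sum_congr rfl fun j _ => hstd i j (A i j)
  refine ⟨fun A => ?_, fun A => hcentral A⟩
  have hA := h2 A
  rw [← hcentral A] at hA
  have : (φ A - A * c) + (φ A - A * c) = 0 := by
    linear_combination (norm := noncomm_ring) hA
  have := htfM _ this
  linear_combination (norm := noncomm_ring) this
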